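/- For every finite tree G (a finite connected acyclic simple graph) there exists a geometric simplicial complex K in ℝ² and an injective map φ from the vertex set of G into ℝ² such that the faces of K are exactly the singletons {φ(v)} for vertices v of G together with the pairs {φ(u), φ(v)} for edges {u,v} of G; that is, every finite tree admits a geometric (straight-line, non-crossing) realization in the plane. -/

import Mathlib

noncomputable section

/-- The standard parabola embedding of `ℝ` into the plane. -/
def pb (x : ℝ) : Fin 2 → ℝ := ![x, x ^ 2]

lemma pb_zero (x : ℝ) : pb x 0 = x := rfl
lemma pb_one (x : ℝ) : pb x 1 = x ^ 2 := rfl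

lemma pb_injective : Function.Injective pb := by
  intro x y h
  have := congrFun h 0
  simpa [pb] using this

lemma seg_mem_destruct {a b : ℝ} {X : Fin 2 → ℝ}
    (h : X ∈ segment ℝ (pb a) (pb b)) :
    ∃ s t : ℝ, 0 ≤ s ∧ 0 ≤ t ∧ s + t = 1 ∧
      X 0 = s * a + t * b ∧ X 1 = s * a ^ 2 + t * b ^ 2 := by
  obtain ⟨s, t, hs, ht, hst, rfl⟩ := h
  exact ⟨s, t, hs, ht, hst, by simp [pb, Matrix.cons_val_zero], by
    simp [pb, Matrix.cons_val_one, Matrix.head_cons]⟩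

/-- coordinates facts of a point on a chord -/
lemma seg_facts {a b : ℝ} (hab : a ≤ b) {X : Fin 2 → ℝ}
    (h : X ∈ segment ℝ (pb a) (pb b)) :
    a ≤ X 0 ∧ X 0 ≤ b ∧ X 1 = (a + b) * X 0 - a * b := by
  obtain ⟨s, t, hs, ht, hst, h0, h1⟩ := seg_mem_destruct h
  have e1 : X 0 - a = t * (b - a) := by linear_combination h0 + a * hst
  have e2 : b - X 0 = s * (b - a) := by linear_combination (-1) * h0 - b * hst
  have n1 : 0 ≤ t * (b - a) := mul_nonneg ht (by linarith)
  have n2 : 0 ≤ s * (b - a) := mul_nonneg hs (by linarith)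
  refine ⟨by linarith, by linarith,
    by linear_combination h1 - (a + b) * h0 - a * b * hst⟩

lemma seg_endpoint_left {a b : ℝ} (hab : a ≠ b) {X : Fin 2 → ℝ}
    (h : X ∈ segment ℝ (pb a) (pb b)) (h0 : X 0 = a) : X = pb a := by
  obtain ⟨s, t, hs, ht, hst, rfl⟩ := h
  have h0' : s * a + t * b = a := by simpa [pb, Matrix.cons_val_zero] using h0
  have ht0 : t = 0 := by
    rcases mul_eq_zero.mp (show t * (b - a) = 0 by linear_combination h0' - a * hst) with h | h
    · exact h
    · exact absurd (by linarith : a = b) hab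
  have hs1 : s = 1 := by linarith
  simp [hs1, ht0]

lemma seg_endpoint_right {a b : ℝ} (hab : a ≠ b) {X : Fin 2 → ℝ}
    (h : X ∈ segment ℝ (pb a) (pb b)) (h0 : X 0 = b) : X = pb b := by
  rw [segment_symm] at h
  exact seg_endpoint_left (Ne.symm hab) h h0

/-- A parabola point on a chord must be an endpoint. -/
lemma point_on_chord {a b c : ℝ} (h : pb c ∈ segment ℝ (pb a) (pb b)) :
    c = a ∨ c = b := by
  obtain ⟨s, t, hs, ht, hst, h0, h1⟩ := seg_mem_destruct h
  rw [pb_zero] at h0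
  rw [pb_one] at h1
  have key : s * t * (a - b) ^ 2 = 0 := by
    linear_combination (c ^ 2) * hst + (c + s * a + t * b) * h0 - (s + t) * h1
  rcases mul_eq_zero.mp key with h' | h'
  · rcases mul_eq_zero.mp h' with h'' | h''
    · right; have : t = 1 := by linarith
      rw [h0, h'', this]; ring
    · left; have : s = 1 := by linarith
      rw [h0, h'', this]; ring
  · have hab : a = b := by
      have := pow_eq_zero_iff (n := 2) (by norm_num) |>.mp h'
      linarith
    left; rw [h0, hab]; linear_combination b * hst

/-- nested case helper: `[c,d] ⊆ [a,b]`. -/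
lemma chord_chord_nested {a b c d : ℝ} (hab : a < b) (hcd : c < d)
    (hac : a ≤ c) (hdb : d ≤ b) {X : Fin 2 → ℝ}
    (h1 : X ∈ segment ℝ (pb a) (pb b)) (h2 : X ∈ segment ℝ (pb c) (pb d)) :
    (a = c ∧ b = d) ∨ ∃ e, (e = a ∨ e = b) ∧ (e = c ∨ e = d) ∧ X = pb e := by
  obtain ⟨haX, hXb, hE1⟩ := seg_facts hab.le h1
  obtain ⟨hcX, hXd, hE2⟩ := seg_facts hcd.le h2
  have key : (X 0 - a) * (b - X 0) = (X 0 - c) * (d - X 0) := by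
    linear_combination hE2 - hE1
  rcases eq_or_lt_of_le hcX with hXc | hXc
  · -- X 0 = c
    rw [← hXc] at key
    have h0 : (c - a) * (b - c) = 0 := by linear_combination key
    have hbc : c < b := lt_of_lt_of_le hcd hdb
    rcases mul_eq_zero.mp h0 with h' | h'
    · have hca : c = a := by linarith
      refine Or.inr ⟨a, Or.inl rfl, Or.inl hca.symm, ?_⟩
      exact seg_endpoint_left hab.ne h1 (by rw [← hXc, hca])
    · exact absurd (by linarith : b = c) (by intro h; exact absurd h.symm hbc.ne)
  rcases eq_or_lt_of_le hXd with hXd' | hXd'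
  · -- X 0 = d
    rw [hXd'] at key
    have h0 : (d - a) * (b - d) = 0 := by linear_combination key
    have had : a < d := lt_of_le_of_lt hac hcd
    rcases mul_eq_zero.mp h0 with h' | h'
    · exact absurd (by linarith : a = d) had.ne
    · have hdb' : d = b := by linarith
      refine Or.inr ⟨b, Or.inr rfl, Or.inr hdb'.symm, ?_⟩
      exact seg_endpoint_right hab.ne h1 (by rw [hXd', hdb'])
  · -- c < X 0 < d : interior, forces a = c and b = d
    left
    have hXa : a < X 0 := lt_of_le_of_lt hac hXc
    have hbX : X 0 < b := lt_of_lt_of_le hXd' hdb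
    have hac' : a = c := by nlinarith
    have hbd : b = d := by nlinarith
    exact ⟨hac', hbd⟩

lemma chord_chord {a b c d : ℝ} (hab : a < b) (hcd : c < d)
    (h : b ≤ c ∨ d ≤ a ∨ (a ≤ c ∧ d ≤ b) ∨ (c ≤ a ∧ b ≤ d)) {X : Fin 2 → ℝ}
    (h1 : X ∈ segment ℝ (pb a) (pb b)) (h2 : X ∈ segment ℝ (pb c) (pb d)) :
    (a = c ∧ b = d) ∨ ∃ e, (e = a ∨ e = b) ∧ (e = c ∨ e = d) ∧ X = pb e := by
  obtain ⟨haX, hXb, hE1⟩ := seg_facts hab.le h1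
  obtain ⟨hcX, hXd, hE2⟩ := seg_facts hcd.le h2
  rcases h with h | h | ⟨h, h'⟩ | ⟨h, h'⟩
  · -- disjoint : b ≤ c
    have hXb' : X 0 = b := le_antisymm hXb (by linarith)
    have hbc : b = c := by linarith
    exact Or.inr ⟨b, Or.inr rfl, Or.inl hbc, seg_endpoint_right hab.ne h1 hXb'⟩
  · -- disjoint : d ≤ a
    have hXa : X 0 = a := le_antisymm (by linarith) haX
    have had : a = d := by linarith
    exact Or.inr ⟨a, Or.inl rfl, Or.inr had, seg_endpoint_left hab.ne h1 hXa⟩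
  · exact chord_chord_nested hab hcd h h' h1 h2
  · rcases chord_chord_nested hcd hab h h' h2 h1 with ⟨e1, e2⟩ | ⟨e, he1, he2, he3⟩
    · exact Or.inl ⟨e1.symm, e2.symm⟩
    · exact Or.inr ⟨e, he2, he1, he3⟩

open Finset in
lemma finset_subset_pair {α : Type*} [DecidableEq α] {a b : α} {t : Finset α}
    (h : t ⊆ {a, b}) : t = ∅ ∨ t = {a} ∨ t = {b} ∨ t = {a, b} := by
  by_cases ha : a ∈ t <;> by_cases hb : b ∈ t
  · refine Or.inr (Or.inr (Or.inr ?_))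
    exact Finset.Subset.antisymm h (Finset.insert_subset ha (Finset.singleton_subset_iff.mpr hb))
  · refine Or.inr (Or.inl ?_)
    apply Finset.Subset.antisymm _ (Finset.singleton_subset_iff.mpr ha)
    intro x hx
    rcases Finset.mem_insert.mp (h hx) with h' | h'
    · simp [h']
    · exact absurd (Finset.mem_singleton.mp h' ▸ hx) hb
  · refine Or.inr (Or.inr (Or.inl ?_))
    apply Finset.Subset.antisymm _ (Finset.singleton_subset_iff.mpr hb)
    intro x hx
    rcases Finset.mem_insert.mp (h hx) with h' | h'
    · exact absurd (h' ▸ hx) ha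
    · simpa using h'
  · left
    rw [Finset.eq_empty_iff_forall_notMem]
    intro x hx
    rcases Finset.mem_insert.mp (h hx) with h' | h'
    · exact ha (h' ▸ hx)
    · exact hb (Finset.mem_singleton.mp h' ▸ hx)

lemma singleton_affineIndependent {E : Type*} [AddCommGroup E] [Module ℝ E]
    [DecidableEq E] (P : E) :
    AffineIndependent ℝ ((↑) : ({P} : Finset E) → E) := by
  haveI : Subsingleton (({P} : Finset E) : Type _) :=
    ⟨fun x y => Subtype.ext (by
      have hx := Finset.mem_singleton.mp x.2
      have hy := Finset.mem_singleton.mp y.2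
      rw [hx, hy])⟩
  exact affineIndependent_of_subsingleton ℝ _

lemma pair_affineIndependent {E : Type*} [AddCommGroup E] [Module ℝ E]
    [DecidableEq E] {P Q : E} (h : P ≠ Q) :
    AffineIndependent ℝ ((↑) : ({P, Q} : Finset E) → E) := by
  have base : AffineIndependent ℝ ![P, Q] := affineIndependent_of_ne ℝ h
  classical
  let f : (({P, Q} : Finset E) : Type _) ↪ Fin 2 :=
    ⟨fun x => if (x : E) = P then 0 else 1, by
      intro x y hxy
      apply Subtype.ext
      have hx := Finset.mem_insert.mp x.2
      have hy := Finset.mem_insert.mp y.2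
      by_cases hxP : (x : E) = P <;> by_cases hyP : (y : E) = P
      · rw [hxP, hyP]
      · simp [hxP, hyP] at hxy
      · simp [hxP, hyP] at hxy
      · have hx' : (x : E) = Q := by
          rcases hx with h' | h'
          · exact absurd h' hxP
          · exact Finset.mem_singleton.mp h'
        have hy' : (y : E) = Q := by
          rcases hy with h' | h'
          · exact absurd h' hyP
          · exact Finset.mem_singleton.mp h'
        rw [hx', hy']⟩
  have : ((↑) : ({P, Q} : Finset E) → E) = ![P, Q] ∘ f := by
    funext x
    by_cases hxP : (x : E) = P
    · show _ = ![P, Q] (if (x : E) = P then 0 else 1)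
      simp [hxP]
    · have hx' : (x : E) = Q := by
        rcases Finset.mem_insert.mp x.2 with h' | h'
        · exact absurd h' hxP
        · exact Finset.mem_singleton.mp h'
      show _ = ![P, Q] (if (x : E) = P then 0 else 1)
      simp [hxP, hx', Ne.symm h]
  rw [this]
  exact base.comp_embedding f

/-- The nested-or-disjoint (laminar) condition on two closed intervals
given by unordered pairs of endpoints. -/
def NOD (a b c d : ℝ) : Prop :=
  max a b ≤ min c d ∨ max c d ≤ min a b ∨
    (min a b ≤ min c d ∧ max c d ≤ max a b) ∨
    (min c d ≤ min a b ∧ max a b ≤ max c d)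

lemma NOD.symm {a b c d : ℝ} (h : NOD a b c d) : NOD c d a b := by
  unfold NOD at h ⊢; tauto

lemma nod_segment {a b c d : ℝ} (hab : a ≠ b) (hcd : c ≠ d) (h : NOD a b c d)
    {X : Fin 2 → ℝ} (h1 : X ∈ segment ℝ (pb a) (pb b))
    (h2 : X ∈ segment ℝ (pb c) (pb d)) :
    ((a = c ∧ b = d) ∨ (a = d ∧ b = c)) ∨
      ∃ e, (e = a ∨ e = b) ∧ (e = c ∨ e = d) ∧ X = pb e := by
  unfold NOD at h
  rcases le_total a b with hab' | hab' <;> rcases le_total c d with hcd' | hcd'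
  · rw [min_eq_left hab', max_eq_right hab', min_eq_left hcd', max_eq_right hcd'] at h
    rcases chord_chord (lt_of_le_of_ne hab' hab) (lt_of_le_of_ne hcd' hcd) h h1 h2 with
      h' | ⟨e, he1, he2, he3⟩
    · exact Or.inl (Or.inl h')
    · exact Or.inr ⟨e, he1, he2, he3⟩
  · rw [min_eq_left hab', max_eq_right hab', min_eq_right hcd', max_eq_left hcd'] at h
    rw [segment_symm] at h2
    rcases chord_chord (lt_of_le_of_ne hab' hab)
        (lt_of_le_of_ne hcd' (Ne.symm hcd)) h h1 h2 with h' | ⟨e, he1, he2, he3⟩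
    · exact Or.inl (Or.inr h')
    · exact Or.inr ⟨e, he1, he2.symm, he3⟩
  · rw [min_eq_right hab', max_eq_left hab', min_eq_left hcd', max_eq_right hcd'] at h
    rw [segment_symm] at h1
    rcases chord_chord (lt_of_le_of_ne hab' (Ne.symm hab))
        (lt_of_le_of_ne hcd' hcd) h h1 h2 with ⟨hh1, hh2⟩ | ⟨e, he1, he2, he3⟩
    · exact Or.inl (Or.inr ⟨hh2, hh1⟩)
    · exact Or.inr ⟨e, he1.symm, he2, he3⟩
  · rw [min_eq_right hab', max_eq_left hab', min_eq_right hcd', max_eq_left hcd'] at h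
    rw [segment_symm] at h1 h2
    rcases chord_chord (lt_of_le_of_ne hab' (Ne.symm hab))
        (lt_of_le_of_ne hcd' (Ne.symm hcd)) h h1 h2 with ⟨hh1, hh2⟩ | ⟨e, he1, he2, he3⟩
    · exact Or.inl (Or.inl ⟨hh2, hh1⟩)
    · exact Or.inr ⟨e, he1.symm, he2.symm, he3⟩

lemma build_complex {V : Type*} (G : SimpleGraph V) (φr : V → ℝ)
    (hinj : Function.Injective φr)
    (hlam : ∀ u v u' v', G.Adj u v → G.Adj u' v' →
      NOD (φr u) (φr v) (φr u') (φr v')) :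
    ∃ K : Geometry.SimplicialComplex ℝ (Fin 2 → ℝ),
      K.faces = {s : Finset (Fin 2 → ℝ) |
        (∃ v : V, s = {pb (φr v)}) ∨
        ∃ u v : V, G.Adj u v ∧ s = {pb (φr u), pb (φr v)}} := by
  classical
  set Φ : V → Fin 2 → ℝ := fun v => pb (φr v) with hΦ
  have hΦinj : Function.Injective Φ := fun u v h => hinj (pb_injective h)
  set F : Set (Finset (Fin 2 → ℝ)) := {s : Finset (Fin 2 → ℝ) |
        (∃ v : V, s = {Φ v}) ∨
        ∃ u v : V, G.Adj u v ∧ s = {Φ u, Φ v}} with hF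
  -- hull of faces
  have hull_single : ∀ v : V, convexHull ℝ (({Φ v} : Finset (Fin 2 → ℝ)) : Set (Fin 2 → ℝ))
      = {Φ v} := by
    intro v; rw [Finset.coe_singleton, convexHull_singleton]
  have hull_pair : ∀ u v : V,
      convexHull ℝ (({Φ u, Φ v} : Finset (Fin 2 → ℝ)) : Set (Fin 2 → ℝ))
      = segment ℝ (pb (φr u)) (pb (φr v)) := by
    intro u v
    rw [Finset.coe_insert, Finset.coe_singleton, convexHull_pair]
  -- the singleton-vs-pair intersection property
  have key_sp : ∀ (w u v : V), G.Adj u v → ∀ x : Fin 2 → ℝ,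
      x ∈ convexHull ℝ (({Φ w} : Finset (Fin 2 → ℝ)) : Set (Fin 2 → ℝ)) →
      x ∈ convexHull ℝ (({Φ u, Φ v} : Finset (Fin 2 → ℝ)) : Set (Fin 2 → ℝ)) →
      x ∈ ((({Φ w} : Finset (Fin 2 → ℝ)) : Set (Fin 2 → ℝ)) ∩
        (({Φ u, Φ v} : Finset (Fin 2 → ℝ)) : Set (Fin 2 → ℝ))) := by
    intro w u v hadj x hx1 hx2
    rw [hull_single] at hx1
    rw [hull_pair] at hx2
    rw [Set.mem_singleton_iff] at hx1
    subst hx1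
    rcases point_on_chord hx2 with h' | h'
    · have : w = u := hinj h'
      subst this
      exact ⟨by simp, by simp⟩
    · have : w = v := hinj h'
      subst this
      exact ⟨by simp, by simp⟩
  refine (fun (hne : ∅ ∉ F)
      (hind : ∀ {s}, s ∈ F → AffineIndependent ℝ ((↑) : s → Fin 2 → ℝ))
      (hdc : ∀ {s t : Finset (Fin 2 → ℝ)}, s ∈ F → t ⊆ s → t ≠ ∅ → t ∈ F)
      (hint : ∀ {s t}, s ∈ F → t ∈ F → convexHull ℝ (s : Set (Fin 2 → ℝ)) ∩
        convexHull ℝ (t : Set (Fin 2 → ℝ)) ⊆ convexHull ℝ (s ∩ t : Set (Fin 2 → ℝ))) =>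
      ⟨⟨⟨F, fun s hs => ⟨Finset.nonempty_iff_ne_empty.mpr (fun h => hne (h ▸ hs)),
        fun t hts htne => hdc hs hts htne.ne_empty⟩⟩, hind, hint⟩, rfl⟩) ?_ ?_ ?_ ?_
  · -- not_empty_mem
    rintro (⟨v, hv⟩ | ⟨u, v, _, hv⟩)
    · exact Finset.singleton_ne_empty _ hv.symm
    · exact Finset.insert_ne_empty _ _ hv.symm
  · -- indep
    rintro s (⟨v, rfl⟩ | ⟨u, v, hadj, rfl⟩)
    · exact singleton_affineIndependent _
    · exact pair_affineIndependent (fun h => hadj.ne (hΦinj h))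
  · -- down_closed
    rintro s t (⟨v, rfl⟩ | ⟨u, v, hadj, rfl⟩) hts htne
    · rcases Finset.subset_singleton_iff.mp hts with rfl | rfl
      · exact absurd rfl htne
      · exact Or.inl ⟨v, rfl⟩
    · rcases finset_subset_pair hts with rfl | rfl | rfl | rfl
      · exact absurd rfl htne
      · exact Or.inl ⟨u, rfl⟩
      · exact Or.inl ⟨v, rfl⟩
      · exact Or.inr ⟨u, v, hadj, rfl⟩
  · -- inter_subset_convexHull
    rintro s t (⟨v, rfl⟩ | ⟨u, v, hadj, rfl⟩) (⟨v', rfl⟩ | ⟨u', v', hadj', rfl⟩) <;>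
      intro x hx <;> obtain ⟨hx1, hx2⟩ := hx
    · -- singleton / singleton
      rw [hull_single] at hx1 hx2
      rw [Set.mem_singleton_iff] at hx1 hx2
      apply subset_convexHull ℝ _
      rw [hx1] at hx2 ⊢
      exact ⟨by simp, by simp [hx2]⟩
    · -- singleton / pair
      exact subset_convexHull ℝ _ (key_sp v u' v' hadj' x hx1 hx2)
    · -- pair / singleton
      apply subset_convexHull ℝ _
      rw [Set.inter_comm]
      exact key_sp v' u v hadj x hx2 hx1
    · -- pair / pair
      rw [hull_pair] at hx1 hx2
      have hne1 : φr u ≠ φr v := fun h => hadj.ne (hinj h)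
      have hne2 : φr u' ≠ φr v' := fun h => hadj'.ne (hinj h)
      rcases nod_segment hne1 hne2 (hlam u v u' v' hadj hadj') hx1 hx2 with
        (⟨e1, e2⟩ | ⟨e1, e2⟩) | ⟨e, he1, he2, he3⟩
      · have hu : u = u' := hinj e1
        have hv : v = v' := hinj e2
        subst hu; subst hv
        rw [Set.inter_self, hull_pair]
        exact hx1
      · have hu : u = v' := hinj e1
        have hv : v = u' := hinj e2
        subst hu; subst hv
        rw [Finset.pair_comm (Φ v) (Φ u), Set.inter_self, hull_pair]
        exact hx1
      · apply subset_convexHull ℝ _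
        have hxs : x ∈ ({Φ u, Φ v} : Finset (Fin 2 → ℝ)) := by
          rcases he1 with rfl | rfl
          · rw [he3]; simp [hΦ]
          · rw [he3]; simp [hΦ]
        have hxt : x ∈ ({Φ u', Φ v'} : Finset (Fin 2 → ℝ)) := by
          rcases he2 with rfl | rfl
          · rw [he3]; simp [hΦ]
          · rw [he3]; simp [hΦ]
        exact ⟨hxs, hxt⟩

open SimpleGraph in
lemma tree_exists_leaf {V : Type*} [Fintype V] {G : SimpleGraph V} (hG : G.IsTree)
    (h2 : 1 < Fintype.card V) :
    ∃ l x : V, G.Adj x l ∧ ∀ y, G.Adj y l → y = x := by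
  classical
  obtain ⟨r⟩ := hG.isConnected.nonempty
  set P : ∀ v : V, G.Walk r v := fun v => (hG.existsUnique_path r v).choose with hPdef
  have hP : ∀ v, (P v).IsPath := fun v => (hG.existsUnique_path r v).choose_spec.1
  have hPu : ∀ (v : V) (q : G.Walk r v), q.IsPath → q = P v :=
    fun v q hq => (hG.existsUnique_path r v).choose_spec.2 q hq
  set f : V → ℕ := fun v => (P v).length with hf
  obtain ⟨l, -, hl⟩ := Finset.exists_max_image Finset.univ f ⟨r, Finset.mem_univ r⟩
  have hl' : ∀ v, f v ≤ f l := fun v => hl v (Finset.mem_univ v)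
  have hfr : f r = 0 := by
    have : (Walk.nil : G.Walk r r) = P r := hPu r Walk.nil Walk.IsPath.nil
    simp [hf, ← this]
  have hlr : l ≠ r := by
    obtain ⟨v, hv⟩ := Fintype.exists_ne_of_one_lt_card h2 r
    have h1 : 1 ≤ f v := by
      rcases Nat.eq_zero_or_pos (f v) with h | h
      · exact absurd (Walk.eq_of_length_eq_zero h).symm hv
      · exact h
    intro h
    rw [h] at hl'
    have := hl' v
    omega
  -- key: the reverse support of the path to `l` starts with `l` followed by any neighbor
  have key : ∀ y, G.Adj y l → ∃ t : List V, (P l).reverse.support = l :: y :: t := by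
    intro y hy
    have hnl : l ∉ (P y).support := by
      intro hmem
      have htake : ((P y).takeUntil l hmem).IsPath := (hP y).takeUntil hmem
      have hteq : (P y).takeUntil l hmem = P l := hPu l _ htake
      have hspec := (P y).take_spec hmem
      have hlen : ((P y).takeUntil l hmem).length + ((P y).dropUntil l hmem).length
          = (P y).length := by
        rw [← Walk.length_append, hspec]
      have hd1 : 1 ≤ ((P y).dropUntil l hmem).length := by
        rcases Nat.eq_zero_or_pos ((P y).dropUntil l hmem).length with h | h
        · exact absurd (Walk.eq_of_length_eq_zero h) (G.ne_of_adj hy).symm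
        · exact h
      have := hl' y
      rw [hf] at this
      simp only at this
      rw [← hlen, hteq] at this
      have : f l + 1 ≤ f l := by
        have h1 : (P l).length + 1 ≤ (P l).length + ((P y).dropUntil l hmem).length :=
          Nat.add_le_add_left hd1 _
        exact le_trans h1 this
      omega
    have hq' : ((P y).concat hy).IsPath := by
      rw [← Walk.isPath_reverse_iff, Walk.reverse_concat, Walk.cons_isPath_iff]
      refine ⟨(hP y).reverse, ?_⟩
      rw [Walk.support_reverse, List.mem_reverse]
      exact hnl
    have heq : (P y).concat hy = P l := hPu l _ hq'
    refine ⟨(P y).reverse.support.tail, ?_⟩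
    rw [← heq, Walk.reverse_concat, Walk.support_cons]
    congr 1
    exact (P y).reverse.support_eq_cons
  obtain ⟨x, hlx, q, hq⟩ := Walk.exists_eq_cons_of_ne hlr (P l).reverse
  refine ⟨l, x, hlx.symm, ?_⟩
  intro y hy
  obtain ⟨t1, ht1⟩ := key y hy
  obtain ⟨t2, ht2⟩ := key x hlx.symm
  rw [ht1] at ht2
  have : y :: t1 = x :: t2 := by injection ht2
  injection this

open SimpleGraph in
lemma walk_transfer {V : Type*} {G : SimpleGraph V} {l : V} :
    ∀ {u w : V} (p : G.Walk u w), l ∉ p.support → ∀ (hu : u ≠ l) (hw : w ≠ l),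
      (G.comap (Subtype.val : {v : V // v ≠ l} → V)).Reachable ⟨u, hu⟩ ⟨w, hw⟩ := by
  intro u w p
  induction p with
  | nil =>
    intro _ hu hw
    exact Reachable.refl _
  | @cons u b w h q ih =>
    intro hsup hu hw
    rw [Walk.support_cons, List.mem_cons] at hsup
    push_neg at hsup
    have hbq : b ∈ q.support := q.start_mem_support
    have hb : b ≠ l := fun e => hsup.2 (e ▸ hbq)
    have hadj : (G.comap (Subtype.val : {v : V // v ≠ l} → V)).Adj ⟨u, hu⟩ ⟨b, hb⟩ := h
    exact (hadj.reachable).trans (ih hsup.2 hb hw)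

open SimpleGraph in
lemma tree_delete {V : Type*} {G : SimpleGraph V} {l x : V} (hG : G.IsTree)
    (hx : G.Adj x l) (hux : ∀ y, G.Adj y l → y = x) :
    (G.comap (Subtype.val : {v : V // v ≠ l} → V)).IsTree := by
  classical
  set G' := G.comap (Subtype.val : {v : V // v ≠ l} → V) with hG'
  constructor
  · -- connected
    have hpre : G'.Preconnected := by
      rintro ⟨u, hu⟩ ⟨w, hw⟩
      obtain ⟨p, hp, -⟩ := hG.existsUnique_path u w
      have hnl : l ∉ p.support := by
        intro hmem
        have hlu : l ≠ u := Ne.symm hu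
        have hlw : l ≠ w := Ne.symm hw
        set p1 := p.takeUntil l hmem with hp1
        set p2 := p.dropUntil l hmem with hp2
        obtain ⟨y1, h1, q1, hq1⟩ := Walk.exists_eq_cons_of_ne hlu p1.reverse
        obtain ⟨y2, h2, q2, hq2⟩ := Walk.exists_eq_cons_of_ne hlw p2
        have hy1 : y1 = x := hux y1 h1.symm
        have hy2 : y2 = x := hux y2 h2.symm
        -- y1 in p1.support
        have hy1mem : y1 ∈ p1.support := by
          have : y1 ∈ p1.reverse.support := by
            rw [hq1, Walk.support_cons]
            exact List.mem_cons_of_mem _ q1.start_mem_support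
          rwa [Walk.support_reverse, List.mem_reverse] at this
        -- y2 in p2.support.tail
        have hy2mem : y2 ∈ p2.support.tail := by
          rw [hq2, Walk.support_cons]
          exact q2.start_mem_support
        -- nodup of appended support
        have hspec := p.take_spec hmem
        have hnodup : (p1.append p2).support.Nodup := by
          rw [hspec]; exact hp.support_nodup
        rw [Walk.support_append, List.nodup_append] at hnodup
        exact hnodup.2.2 y1 hy1mem y1 (hy1.trans hy2.symm ▸ hy2mem) rfl
      exact walk_transfer p hnl hu hw
    haveI : Nonempty {v : V // v ≠ l} := ⟨⟨x, G.ne_of_adj hx⟩⟩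
    exact ⟨hpre⟩
  · -- acyclic
    intro v c hc
    have hinj : Function.Injective (Subtype.val : {v : V // v ≠ l} → V) :=
      Subtype.val_injective
    let f : G' →g G := ⟨Subtype.val, fun h => h⟩
    have : (c.map f).IsCycle := (Walk.map_isCycle_iff_of_injective hinj).mpr hc
    exact hG.IsAcyclic (c.map f) this

lemma nod_congr {a b a' b' c d c' d' : ℝ} (h1 : min a b = min a' b')
    (h2 : max a b = max a' b') (h3 : min c d = min c' d')
    (h4 : max c d = max c' d') (h : NOD a' b' c' d') : NOD a b c d := by
  unfold NOD at h ⊢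
  rw [h1, h2, h3, h4]
  exact h

lemma nod_refl (a b : ℝ) : NOD a b a b := Or.inr (Or.inr (Or.inl ⟨le_refl _, le_refl _⟩))

lemma nod_new_old {p q c d : ℝ} (hpq : p < q) (hc : c ≤ p ∨ q < c)
    (hd : d ≤ p ∨ q < d) : NOD p q c d := by
  unfold NOD
  rw [min_eq_left hpq.le, max_eq_right hpq.le]
  rcases hc with hc | hc <;> rcases hd with hd | hd
  · exact Or.inr (Or.inl (max_le hc hd))
  · exact Or.inr (Or.inr (Or.inr ⟨le_trans (min_le_left c d) hc,
      le_trans hd.le (le_max_right c d)⟩))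
  · exact Or.inr (Or.inr (Or.inr ⟨le_trans (min_le_right c d) hd,
      le_trans hc.le (le_max_left c d)⟩))
  · exact Or.inl (le_min hc.le hd.le)

lemma exists_lam (n : ℕ) : ∀ {V : Type u} [Fintype V] (G : SimpleGraph V),
    G.IsTree → Fintype.card V = n →
    ∃ φr : V → ℝ, Function.Injective φr ∧
      ∀ u v u' v', G.Adj u v → G.Adj u' v' →
        NOD (φr u) (φr v) (φr u') (φr v') := by
  induction n with
  | zero =>
    intro V _ G hG hcard
    haveI := hG.isConnected.nonempty
    have := Fintype.card_pos (α := V)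
    omega
  | succ n ih =>
    intro V _ G hG hcard
    classical
    by_cases h1 : Fintype.card V = 1
    · haveI : Subsingleton V := Fintype.card_le_one_iff_subsingleton.mp (by omega)
      refine ⟨fun _ => 0, fun a b _ => Subsingleton.elim a b, ?_⟩
      intro u v _ _ h _
      exact absurd (Subsingleton.elim u v) (G.ne_of_adj h)
    · have h2 : 1 < Fintype.card V := by
        haveI := hG.isConnected.nonempty
        have := Fintype.card_pos (α := V)
        omega
      obtain ⟨l, x, hxl, hux⟩ := tree_exists_leaf hG h2
      set G' := G.comap (Subtype.val : {v : V // v ≠ l} → V) with hG'def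
      have hG'tree : G'.IsTree := tree_delete hG hxl hux
      have hcard' : Fintype.card {v : V // v ≠ l} = n := by
        have := Set.card_ne_eq l (α := V)
        have he : Fintype.card {v : V // v ≠ l} = Fintype.card {v : V | v ≠ l} :=
          Fintype.card_congr (Equiv.refl _)
        omega
      obtain ⟨ψ, hψinj, hψlam⟩ := ih G' hG'tree hcard'
      set u0 : {v : V // v ≠ l} := ⟨x, hxl.ne⟩ with hu0
      -- choose the new coordinate
      obtain ⟨xn, hgt, hsep⟩ : ∃ xn : ℝ, ψ u0 < xn ∧
          ∀ w : {v : V // v ≠ l}, ψ w ≤ ψ u0 ∨ xn < ψ w := by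
        set T := (Finset.univ.image ψ).filter (fun r => ψ u0 < r) with hT
        by_cases hne : T.Nonempty
        · have hmin : ψ u0 < T.min' hne := (Finset.mem_filter.mp (T.min'_mem hne)).2
          refine ⟨(ψ u0 + T.min' hne) / 2, by linarith, ?_⟩
          intro w
          by_cases hw : ψ w ≤ ψ u0
          · exact Or.inl hw
          · push_neg at hw
            have hwT : ψ w ∈ T := by
              rw [hT, Finset.mem_filter]
              exact ⟨Finset.mem_image_of_mem ψ (Finset.mem_univ w), hw⟩
            have := T.min'_le _ hwT
            exact Or.inr (by linarith)
        · refine ⟨ψ u0 + 1, by linarith, ?_⟩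
          intro w
          by_cases hw : ψ w ≤ ψ u0
          · exact Or.inl hw
          · push_neg at hw
            exact absurd ⟨ψ w, by
              rw [hT, Finset.mem_filter]
              exact ⟨Finset.mem_image_of_mem ψ (Finset.mem_univ w), hw⟩⟩ hne
      set φr : V → ℝ := fun v => if h : v = l then xn else ψ ⟨v, h⟩ with hφr
      have hφl : φr l = xn := by rw [hφr]; simp
      have hφne : ∀ (v : V) (h : v ≠ l), φr v = ψ ⟨v, h⟩ := by
        intro v h; rw [hφr]; simp [h]
      have hxn_ne : ∀ w : {v : V // v ≠ l}, ψ w ≠ xn := by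
        intro w
        rcases hsep w with h | h
        · exact fun e => absurd (e ▸ h) (not_le.mpr hgt)
        · exact fun e => absurd (e ▸ h) (lt_irrefl xn)
      have hinj : Function.Injective φr := by
        intro a b hab
        by_cases ha : a = l <;> by_cases hb : b = l
        · rw [ha, hb]
        · rw [hφne b hb, ha, hφl] at hab
          exact absurd hab.symm (hxn_ne ⟨b, hb⟩)
        · rw [hφne a ha, hb, hφl] at hab
          exact absurd hab (hxn_ne ⟨a, ha⟩)
        · rw [hφne a ha, hφne b hb] at hab
          have := hψinj hab
          exact congrArg Subtype.val this
      -- every edge is either an old edge or (as a pair of values) the new edge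
      have echar : ∀ u v, G.Adj u v →
          (∃ (hu : u ≠ l) (hv : v ≠ l), G'.Adj ⟨u, hu⟩ ⟨v, hv⟩ ∧
            φr u = ψ ⟨u, hu⟩ ∧ φr v = ψ ⟨v, hv⟩) ∨
          (min (φr u) (φr v) = ψ u0 ∧ max (φr u) (φr v) = xn) := by
        intro u v h
        by_cases hu : u = l
        · right
          have hv : v = x := hux v (by rw [← hu]; exact h.symm)
          have e1 : φr u = xn := by rw [hu, hφl]
          have e2 : φr v = ψ u0 := by rw [hv]; exact hφne x hxl.ne
          rw [e1, e2]
          exact ⟨min_eq_right hgt.le, max_eq_left hgt.le⟩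
        · by_cases hv : v = l
          · right
            have hu' : u = x := hux u (by rw [← hv]; exact h)
            have e1 : φr u = ψ u0 := by rw [hu']; exact hφne x hxl.ne
            have e2 : φr v = xn := by rw [hv, hφl]
            rw [e1, e2]
            exact ⟨min_eq_left hgt.le, max_eq_right hgt.le⟩
          · exact Or.inl ⟨hu, hv, h, hφne u hu, hφne v hv⟩
      refine ⟨φr, hinj, ?_⟩
      intro u v u' v' h h'
      rcases echar u v h with ⟨hu, hv, hadj, e1, e2⟩ | ⟨m1, m2⟩ <;>
        rcases echar u' v' h' with ⟨hu', hv', hadj', e1', e2'⟩ | ⟨m1', m2'⟩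
      · rw [e1, e2, e1', e2']
        exact hψlam _ _ _ _ hadj hadj'
      · rw [e1, e2]
        refine nod_congr rfl rfl ?_ ?_
          (NOD.symm (nod_new_old hgt (hsep ⟨u, hu⟩) (hsep ⟨v, hv⟩)))
        · rw [m1', min_eq_left hgt.le]
        · rw [m2', max_eq_right hgt.le]
      · rw [e1', e2']
        refine nod_congr ?_ ?_ rfl rfl
          (nod_new_old hgt (hsep ⟨u', hu'⟩) (hsep ⟨v', hv'⟩))
        · rw [m1, min_eq_left hgt.le]
        · rw [m2, max_eq_right hgt.le]
      · refine nod_congr ?_ ?_ ?_ ?_ (nod_refl (ψ u0) xn)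
        · rw [m1, min_eq_left hgt.le]
        · rw [m2, max_eq_right hgt.le]
        · rw [m1', min_eq_left hgt.le]
        · rw [m2', max_eq_right hgt.le]


/-- Every finite tree admits a geometric (straight-line, non-crossing)
realization in the plane: there are a geometric simplicial complex `K` in ℝ² and an
injection `φ` of the vertices into ℝ² whose faces are exactly the singletons on vertices
together with the segments corresponding to the edges. -/
theorem finite_tree_realizable_in_plane {V : Type*} [Fintype V] (G : SimpleGraph V)
    (hG : G.IsTree) :
    ∃ (K : Geometry.SimplicialComplex ℝ (Fin 2 → ℝ)) (φ : V → Fin 2 → ℝ),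
      Function.Injective φ ∧
      K.faces = {s : Finset (Fin 2 → ℝ) |
        (∃ v : V, s = {φ v}) ∨ ∃ u v : V, G.Adj u v ∧ s = {φ u, φ v}} := by
  obtain ⟨φr, hinj, hlam⟩ := exists_lam (Fintype.card V) G hG rfl
  obtain ⟨K, hK⟩ := build_complex G φr hinj hlam
  exact ⟨K, fun v => pb (φr v), fun a b h => hinj (pb_injective h), hK⟩

end
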